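/- Over a field k of characteristic 2, there is no symmetric matrix M (of any dimension) whose entries are affine-linear forms in the variables x, y, z over k such that det(M) = xy + z in k[x,y,z]. -/

import Mathlib

open MvPolynomial

namespace NoSymRepAux

set_option linter.unusedSectionVars false

variable {k : Type*} [Field k] [CharP k 2]

/-- membership in the ideal generated by squares of the variables -/
def SqI (f : MvPolynomial (Fin 3) k) : Prop :=
  ∃ a b c : MvPolynomial (Fin 3) k, f = a * X 0 ^ 2 + b * X 1 ^ 2 + c * X 2 ^ 2

theorem sqI_zero : SqI (0 : MvPolynomial (Fin 3) k) := ⟨0, 0, 0, by ring⟩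

theorem sqI_add {f g : MvPolynomial (Fin 3) k} (hf : SqI f) (hg : SqI g) : SqI (f + g) := by
  obtain ⟨a, b, c, rfl⟩ := hf
  obtain ⟨a', b', c', rfl⟩ := hg
  exact ⟨a + a', b + b', c + c', by ring⟩

theorem sqI_mul (g : MvPolynomial (Fin 3) k) {f : MvPolynomial (Fin 3) k} (hf : SqI f) :
    SqI (g * f) := by
  obtain ⟨a, b, c, rfl⟩ := hf
  exact ⟨g * a, g * b, g * c, by ring⟩

theorem sqI_sum {ι : Type*} (s : Finset ι) (f : ι → MvPolynomial (Fin 3) k)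
    (h : ∀ i ∈ s, SqI (f i)) : SqI (∑ i ∈ s, f i) := by
  classical
  induction s using Finset.induction with
  | empty => simpa using sqI_zero
  | insert _ _ ha ih =>
    rw [Finset.sum_insert ha]
    exact sqI_add (h _ (Finset.mem_insert_self _ _))
      (ih fun i hi => h i (Finset.mem_insert_of_mem hi))

/-- classification of monomials of degree ≤ 1 -/
theorem small_monomial (m : Fin 3 →₀ ℕ) (hm : (m.sum fun _ e => e) ≤ 1) :
    m = 0 ∨ ∃ i, m = Finsupp.single i 1 := by
  have hsum : (m.sum fun _ e => e) = m 0 + m 1 + m 2 := by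
    rw [Finsupp.sum_fintype _ _ (fun _ => rfl)]
    simp [Fin.sum_univ_three]
  rw [hsum] at hm
  by_cases h₀ : m 0 = 1
  · refine Or.inr ⟨0, ?_⟩
    ext j
    fin_cases j <;> simp [Finsupp.single_apply] <;> omega
  · by_cases h₁ : m 1 = 1
    · refine Or.inr ⟨1, ?_⟩
      ext j
      fin_cases j <;> simp [Finsupp.single_apply] <;> omega
    · by_cases h₂ : m 2 = 1
      · refine Or.inr ⟨2, ?_⟩
        ext j
        fin_cases j <;> simp [Finsupp.single_apply] <;> omega
      · refine Or.inl ?_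
        ext j
        fin_cases j <;> simp <;> omega

theorem single_sum (i : Fin 3) : ((Finsupp.single i 1 : Fin 3 →₀ ℕ).sum fun _ e => e) = 1 :=
  Finsupp.sum_single_index rfl

theorem sum_eq_support_sum (m : Fin 3 →₀ ℕ) :
    (m.sum fun _ e => e) = ∑ i ∈ m.support, m i := rfl

/-- a polynomial of total degree ≤ 1 with zero constant coefficient is a linear form -/
theorem lin_decomp (f : MvPolynomial (Fin 3) k) (hdeg : f.totalDegree ≤ 1)
    (h0 : constantCoeff f = 0) :
    f = C (coeff (Finsupp.single 0 1) f) * X 0 + C (coeff (Finsupp.single 1 1) f) * X 1 +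
        C (coeff (Finsupp.single 2 1) f) * X 2 := by
  have h0' : coeff 0 f = 0 := by rwa [constantCoeff_eq] at h0
  apply MvPolynomial.ext
  intro m
  rw [coeff_add, coeff_add, coeff_C_mul, coeff_C_mul, coeff_C_mul, coeff_X', coeff_X', coeff_X']
  by_cases hsm : (m.sum fun _ e => e) ≤ 1
  · rcases small_monomial m hsm with rfl | ⟨i, rfl⟩
    · have : ∀ i : Fin 3, (Finsupp.single i 1 : Fin 3 →₀ ℕ) ≠ 0 := by
        intro i h
        have := congrArg (fun v : Fin 3 →₀ ℕ => v i) h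
        simp at this
      simp [h0', this]
    · have hne : ∀ i j : Fin 3, i ≠ j →
          (Finsupp.single i 1 : Fin 3 →₀ ℕ) ≠ Finsupp.single j 1 := by
        intro i j hij h
        have := congrArg (fun v : Fin 3 →₀ ℕ => v i) h
        simp [Finsupp.single_apply, Ne.symm hij] at this
      fin_cases i <;> simp [hne, Fin.ext_iff] <;> first
        | rfl
        | (try exact (hne _ _ (by decide) (by assumption)).elim)
  · push_neg at hsm
    have hz : coeff m f = 0 :=
      coeff_eq_zero_of_totalDegree_lt (by rw [← sum_eq_support_sum]; omega)
    have hne : ∀ i : Fin 3, (Finsupp.single i 1 : Fin 3 →₀ ℕ) ≠ m := by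
      intro i h
      rw [← h, single_sum] at hsm
      omega
    simp [hz, hne]

/-- In characteristic two, the determinant of a symmetric matrix is the sum over
involutions of the products of entries. -/
theorem det_eq_sum_involutions {A : Type*} [CommRing A] [CharP A 2] {n : ℕ}
    (M : Matrix (Fin n) (Fin n) A) (hsymm : M.IsSymm) :
    M.det = ∑ σ ∈ Finset.univ.filter (fun σ : Equiv.Perm (Fin n) => σ⁻¹ = σ),
      ∏ i, M (σ i) i := by
  classical
  rw [Matrix.det_apply]
  have hsign : ∀ σ : Equiv.Perm (Fin n),
      Equiv.Perm.sign σ • (∏ i, M (σ i) i) = ∏ i, M (σ i) i := by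
    intro σ
    rcases Int.units_eq_one_or (Equiv.Perm.sign σ) with h | h <;> rw [h] <;>
      simp [CharTwo.neg_eq]
  simp_rw [hsign]
  rw [← Finset.sum_filter_add_sum_filter_not Finset.univ
    (fun σ : Equiv.Perm (Fin n) => σ⁻¹ = σ)]
  have hprod : ∀ σ : Equiv.Perm (Fin n), ∏ i, M (σ⁻¹ i) i = ∏ i, M (σ i) i := by
    intro σ
    calc ∏ i, M (σ⁻¹ i) i = ∏ i, M (σ⁻¹ (σ i)) (σ i) :=
          (Equiv.prod_comp σ (fun i => M (σ⁻¹ i) i)).symm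
      _ = ∏ i, M i (σ i) := by simp
      _ = ∏ i, M (σ i) i := Finset.prod_congr rfl fun i _ => (hsymm.apply i (σ i)).symm
  have h0 : ∑ σ ∈ Finset.univ.filter (fun σ : Equiv.Perm (Fin n) => ¬σ⁻¹ = σ),
      ∏ i, M (σ i) i = 0 := by
    refine Finset.sum_involution (fun σ _ => σ⁻¹) ?_ ?_ ?_ ?_
    · intro σ _
      rw [hprod σ]
      exact CharTwo.add_self_eq_zero _
    · intro σ hσ _
      exact (Finset.mem_filter.mp hσ).2
    · intro σ hσ
      simp only [Finset.mem_filter, Finset.mem_univ, true_and, inv_inv] at hσ ⊢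
      exact fun h => hσ h.symm
    · intro σ _
      simp
  rw [h0, add_zero]

theorem prod_congr_sqI {n : ℕ} (σ : Equiv.Perm (Fin n)) (hσ : σ⁻¹ = σ)
    (A B : Matrix (Fin n) (Fin n) (MvPolynomial (Fin 3) k))
    (hA : A.IsSymm) (hB : B.IsSymm)
    (hdiag : ∀ i, A i i = B i i)
    (hoff : ∀ i j, i ≠ j → SqI ((A i j) ^ 2 + (B i j) ^ 2)) :
    ∀ s : Finset (Fin n), (∀ i ∈ s, σ i ∈ s) →
      SqI ((∏ i ∈ s, A (σ i) i) + ∏ i ∈ s, B (σ i) i) := by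
  intro s
  induction s using Finset.strongInduction with
  | _ s ih =>
    intro hcl
    rcases s.eq_empty_or_nonempty with rfl | ⟨a, ha⟩
    · simp only [Finset.prod_empty]
      exact (CharTwo.add_self_eq_zero (1 : MvPolynomial (Fin 3) k)) ▸ sqI_zero
    by_cases hfix : σ a = a
    · have hcl' : ∀ i ∈ s.erase a, σ i ∈ s.erase a := by
        intro i hi
        rcases Finset.mem_erase.mp hi with ⟨hia, his⟩
        refine Finset.mem_erase.mpr ⟨fun h => hia ?_, hcl i his⟩
        exact σ.injective (h.trans hfix.symm)
      have hIH := ih (s.erase a) (Finset.erase_ssubset ha) hcl'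
      rw [← Finset.mul_prod_erase s _ ha, ← Finset.mul_prod_erase s _ ha]
      rw [hfix, hdiag a, ← mul_add]
      exact sqI_mul _ hIH
    · set b := σ a with hbdef
      have hb : b ∈ s := hcl a ha
      have hba : b ≠ a := hfix
      have hbea : b ∈ s.erase a := Finset.mem_erase.mpr ⟨hba, hb⟩
      have hss : σ (σ a) = a := by
        have := congrArg (fun τ : Equiv.Perm (Fin n) => τ (σ a)) hσ
        simpa using this.symm
      have hcl' : ∀ i ∈ (s.erase a).erase b, σ i ∈ (s.erase a).erase b := by
        intro i hi
        rcases Finset.mem_erase.mp hi with ⟨hib, hi'⟩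
        rcases Finset.mem_erase.mp hi' with ⟨hia, his⟩
        refine Finset.mem_erase.mpr ⟨?_, Finset.mem_erase.mpr ⟨?_, hcl i his⟩⟩
        · intro h
          exact hia (σ.injective (h.trans hbdef))
        · intro h
          exact hib (σ.injective (h.trans (hbdef ▸ hss).symm))
      have hsub : (s.erase a).erase b ⊂ s :=
        lt_of_le_of_lt (Finset.erase_subset _ _) (Finset.erase_ssubset ha)
      have hIH := ih _ hsub hcl'
      rw [← Finset.mul_prod_erase s _ ha, ← Finset.mul_prod_erase (s.erase a) _ hbea,
        ← Finset.mul_prod_erase s (fun i => B (σ i) i) ha,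
        ← Finset.mul_prod_erase (s.erase a) (fun i => B (σ i) i) hbea]
      have hsb : σ b = a := by rw [hbdef]; exact hss
      have hA2 : A (σ b) b = A (σ a) a := by
        rw [hsb, hbdef]
        exact hA.apply (σ a) a
      have hB2 : B (σ b) b = B (σ a) a := by
        rw [hsb, hbdef]
        exact hB.apply (σ a) a
      rw [hA2, hB2]
      set X := A (σ a) a
      set Y := B (σ a) a
      set P := ∏ i ∈ (s.erase a).erase b, A (σ i) i with hP
      set Q := ∏ i ∈ (s.erase a).erase b, B (σ i) i with hQ
      have hXY : SqI (X ^ 2 + Y ^ 2) := hoff (σ a) a (hbdef ▸ hfix)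
      have key : X * (X * P) + Y * (Y * Q) = X ^ 2 * (P + Q) + Q * (X ^ 2 + Y ^ 2) := by
        have h2 := CharTwo.add_self_eq_zero (X ^ 2 * Q)
        linear_combination -h2
      rw [key]
      exact sqI_add (sqI_mul _ hIH) (sqI_mul _ hXY)

/-- Master congruence: modulo the squares ideal, the determinant of a symmetric
affine matrix agrees with the determinant of the matrix whose off-diagonal
entries are truncated to their constant terms. -/
theorem master_congruence {n : ℕ}
    (A B : Matrix (Fin n) (Fin n) (MvPolynomial (Fin 3) k))
    (hA : A.IsSymm) (hB : B.IsSymm)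
    (hdiag : ∀ i, A i i = B i i)
    (hoff : ∀ i j, i ≠ j → SqI ((A i j) ^ 2 + (B i j) ^ 2)) :
    SqI (A.det + B.det) := by
  rw [det_eq_sum_involutions A hA, det_eq_sum_involutions B hB, ← Finset.sum_add_distrib]
  refine sqI_sum _ _ fun σ hσ => ?_
  exact prod_congr_sqI σ (Finset.mem_filter.mp hσ).2 A B hA hB hdiag hoff Finset.univ
    (fun i _ => Finset.mem_univ _)

theorem sqI_sq_of_affine (f : MvPolynomial (Fin 3) k) (hdeg : f.totalDegree ≤ 1) :
    SqI (f ^ 2 + (C (constantCoeff f)) ^ 2) := by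
  set g := f + C (constantCoeff f) with hg
  have hsq : f ^ 2 + (C (constantCoeff f)) ^ 2 = g ^ 2 := (CharTwo.add_sq _ _).symm
  rw [hsq]
  have hdegg : g.totalDegree ≤ 1 := by
    refine le_trans (totalDegree_add _ _) ?_
    simp [hdeg, totalDegree_C]
  have hcg : constantCoeff g = 0 := by
    rw [hg, map_add, constantCoeff_C]
    exact CharTwo.add_self_eq_zero _
  rw [lin_decomp g hdegg hcg, CharTwo.add_sq, CharTwo.add_sq, mul_pow, mul_pow, mul_pow]
  exact ⟨(C (coeff (Finsupp.single 0 1) g)) ^ 2, (C (coeff (Finsupp.single 1 1) g)) ^ 2,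
    (C (coeff (Finsupp.single 2 1) g)) ^ 2, rfl⟩

theorem coeff_mul_Xsq (a : MvPolynomial (Fin 3) k) (i : Fin 3) (m : Fin 3 →₀ ℕ)
    (hm : m i ≤ 1) : coeff m (a * X i ^ 2) = 0 := by
  rw [pow_two, ← mul_assoc, coeff_mul_X']
  split_ifs with h₁
  · rw [coeff_mul_X']
    split_ifs with h₂
    · exfalso
      rw [Finsupp.mem_support_iff] at h₁ h₂
      rw [Finsupp.tsub_apply, Finsupp.single_apply, if_pos rfl] at h₂
      omega
    · rfl
  · rfl

theorem sqI_coeff {f : MvPolynomial (Fin 3) k} (hf : SqI f) (m : Fin 3 →₀ ℕ)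
    (h0 : m 0 ≤ 1) (h1 : m 1 ≤ 1) (h2 : m 2 ≤ 1) : coeff m f = 0 := by
  obtain ⟨a, b, c, rfl⟩ := hf
  rw [coeff_add, coeff_add, coeff_mul_Xsq a 0 m h0, coeff_mul_Xsq b 1 m h1,
    coeff_mul_Xsq c 2 m h2]
  ring

end NoSymRepAux

open NoSymRepAux in
/-- Over a field of characteristic 2, no symmetric matrix of any dimension
with affine-linear entries in the variables `x, y, z` has determinant
`xy + z`. -/
theorem no_symmetric_rep_char_two {k : Type*} [Field k] [CharP k 2] (n : ℕ)
    (M : Matrix (Fin n) (Fin n) (MvPolynomial (Fin 3) k))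
    (hsymm : M.IsSymm)
    (haff : ∀ i j, (M i j).totalDegree ≤ 1) :
    M.det ≠ X 0 * X 1 + X 2 := by
  classical
  intro hdet
  -- the constant-term matrix
  set C0 : Matrix (Fin n) (Fin n) k := M.map constantCoeff with hC0
  have hdetC0 : C0.det = 0 := by
    have h := RingHom.map_det (constantCoeff : MvPolynomial (Fin 3) k →+* k) M
    rw [RingHom.mapMatrix_apply, hdet] at h
    rw [hC0, ← h]
    simp
  obtain ⟨u, hu0, huv⟩ := (Matrix.exists_mulVec_eq_zero_iff).mpr hdetC0
  obtain ⟨p, hup⟩ : ∃ p, u p ≠ 0 := by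
    by_contra h
    push_neg at h
    exact hu0 (funext h)
  set R : Matrix (Fin n) (Fin n) k := (1 : Matrix (Fin n) (Fin n) k).updateCol p u with hR
  have hdetR : R.det = u p := by
    rw [hR, ← Matrix.cramer_apply, Matrix.cramer_one]
    rfl
  set Rp : Matrix (Fin n) (Fin n) (MvPolynomial (Fin 3) k) :=
    R.map (C : k →+* MvPolynomial (Fin 3) k) with hRp
  set M' : Matrix (Fin n) (Fin n) (MvPolynomial (Fin 3) k) := Rp.transpose * M * Rp with hM'
  have hdetRp : Rp.det = C (u p) := by
    rw [hRp, ← RingHom.mapMatrix_apply, ← RingHom.map_det, hdetR]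
  have hdetM' : M'.det = C ((u p) ^ 2) * (X 0 * X 1 + X 2) := by
    rw [hM', Matrix.det_mul, Matrix.det_mul, Matrix.det_transpose, hdetRp, hdet, map_pow]
    ring
  have hsymm' : M'.IsSymm := by
    rw [Matrix.IsSymm, hM', Matrix.transpose_mul, Matrix.transpose_mul,
      Matrix.transpose_transpose, hsymm.eq, Matrix.mul_assoc]
  have haff' : ∀ i j, (M' i j).totalDegree ≤ 1 := by
    intro i j
    rw [hM', Matrix.mul_apply]
    refine le_trans (totalDegree_finset_sum _ _) (Finset.sup_le fun b _ => ?_)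
    refine le_trans (totalDegree_mul _ _) ?_
    have h2 : (Rp b j).totalDegree = 0 := by
      rw [hRp, Matrix.map_apply]
      exact totalDegree_C _
    rw [h2, add_zero, Matrix.mul_apply]
    refine le_trans (totalDegree_finset_sum _ _) (Finset.sup_le fun a _ => ?_)
    refine le_trans (totalDegree_mul _ _) ?_
    have h3 : (Rp.transpose i a).totalDegree = 0 := by
      rw [hRp, Matrix.transpose_apply, Matrix.map_apply]
      exact totalDegree_C _
    rw [h3, zero_add]
    exact haff a b
  have hRpcc : Rp.map (constantCoeff : MvPolynomial (Fin 3) k → k) = R := by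
    rw [hRp, Matrix.map_map]
    have hid : ((constantCoeff : MvPolynomial (Fin 3) k → k) ∘
        ⇑(C : k →+* MvPolynomial (Fin 3) k)) = id := by
      funext x
      simp
    rw [hid, Matrix.map_id]
  have hmapM' : M'.map constantCoeff = R.transpose * C0 * R := by
    have h1 : ∀ A B : Matrix (Fin n) (Fin n) (MvPolynomial (Fin 3) k),
        (A * B).map (constantCoeff : MvPolynomial (Fin 3) k → k) =
          A.map constantCoeff * B.map constantCoeff := by
      intro A B
      rw [← RingHom.mapMatrix_apply, ← RingHom.mapMatrix_apply, ← RingHom.mapMatrix_apply,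
        ← map_mul]
    rw [hM', h1, h1, hRpcc, Matrix.transpose_map, hRpcc, ← hC0]
  have hsymmap : (M'.map constantCoeff).IsSymm := hsymm'.map _
  have hcolp : ∀ j, (M'.map constantCoeff) j p = 0 := by
    intro j
    rw [hmapM', Matrix.mul_assoc, Matrix.mul_apply]
    have hz : ∀ b, (C0 * R) b p = 0 := by
      intro b
      rw [Matrix.mul_apply]
      have : ∀ l, R l p = u l := by
        intro l
        rw [hR, Matrix.updateCol_apply, if_pos rfl]
      calc ∑ l, C0 b l * R l p = ∑ l, C0 b l * u l := by simp_rw [this]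
        _ = C0.mulVec u b := rfl
        _ = 0 := by rw [huv]; rfl
    simp [hz]
  have hrowp : ∀ j, (M'.map constantCoeff) p j = 0 := by
    intro j
    rw [← hsymmap.apply, hcolp j]
  -- the comparison matrix
  set N : Matrix (Fin n) (Fin n) (MvPolynomial (Fin 3) k) :=
    Matrix.of (fun i j => if i = j then M' i j else C ((M'.map constantCoeff) i j)) with hN
  have hNsymm : N.IsSymm := by
    rw [Matrix.IsSymm]
    ext i j
    rw [Matrix.transpose_apply, hN]
    by_cases h : i = j
    · subst h; simp
    · simp only [Matrix.of_apply, if_neg h, if_neg (Ne.symm h)]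
      rw [hsymmap.apply]
  have hmc : SqI (M'.det + N.det) := by
    refine master_congruence M' N hsymm' hNsymm (fun i => by simp [hN]) (fun i j hij => ?_)
    have : N i j = C (constantCoeff (M' i j)) := by
      rw [hN]
      simp [if_neg hij, Matrix.map_apply]
    rw [this]
    exact sqI_sq_of_affine (M' i j) (haff' i j)
  -- factor the determinant of N
  have hconstl : constantCoeff (M' p p) = 0 := by
    have := hrowp p
    rwa [Matrix.map_apply] at this
  have hrowN : N p = (M' p p) • (Pi.single p 1 : Fin n → MvPolynomial (Fin 3) k) := by
    funext j
    rw [Pi.smul_apply, Pi.single_apply, hN]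
    by_cases h : p = j
    · subst h; simp
    · rw [Matrix.of_apply, if_neg h, if_neg (Ne.symm h), hrowp j, map_zero, smul_zero]
  have hdetN : N.det = (M' p p) * (N.updateRow p (Pi.single p 1)).det := by
    conv_lhs => rw [← Matrix.updateRow_eq_self N p, hrowN]
    rw [Matrix.det_updateRow_smul]
  -- coefficient bookkeeping
  set l : MvPolynomial (Fin 3) k := M' p p with hldef
  set K : MvPolynomial (Fin 3) k := (N.updateRow p (Pi.single p 1)).det with hKdef
  set g0 : k := constantCoeff K with hg0
  set a : k := coeff (Finsupp.single 0 1) l with ha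
  set b : k := coeff (Finsupp.single 1 1) l with hb
  set c : k := coeff (Finsupp.single 2 1) l with hc
  have hl : l = C a * X 0 + C b * X 1 + C c * X 2 := lin_decomp l (haff' p p) hconstl
  have hDcoeff : ∀ m : Fin 3 →₀ ℕ, m 0 ≤ 1 → m 1 ≤ 1 → m 2 ≤ 1 →
      coeff m M'.det + coeff m N.det = 0 := by
    intro m h0 h1 h2
    rw [← coeff_add]
    exact sqI_coeff hmc m h0 h1 h2
  have hlK : ∀ m : Fin 3 →₀ ℕ, coeff m (l * K) =
      a * (if (0 : Fin 3) ∈ m.support then coeff (m - Finsupp.single 0 1) K else 0) +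
      b * (if (1 : Fin 3) ∈ m.support then coeff (m - Finsupp.single 1 1) K else 0) +
      c * (if (2 : Fin 3) ∈ m.support then coeff (m - Finsupp.single 2 1) K else 0) := by
    intro m
    rw [hl, add_mul, add_mul, coeff_add, coeff_add, mul_assoc, mul_assoc, mul_assoc,
      coeff_C_mul, coeff_C_mul, coeff_C_mul, coeff_X_mul', coeff_X_mul', coeff_X_mul']
  have hmemiff : ∀ i j : Fin 3, i ∈ (Finsupp.single j (1:ℕ)).support ↔ i = j := by
    intro i j
    simp [Finsupp.support_single_ne_zero]
  have hcoeff0K : coeff (0 : Fin 3 →₀ ℕ) K = g0 := by rw [hg0, constantCoeff_eq]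
  have hT0 : coeff (Finsupp.single (0:Fin 3) 1) (X 0 * X 1 + X 2 : MvPolynomial (Fin 3) k) = 0 := by
    rw [coeff_add, coeff_mul_X', coeff_X']
    simp [Finsupp.support_single_ne_zero, Finsupp.single_eq_single_iff]
  have hT1 : coeff (Finsupp.single (1:Fin 3) 1) (X 0 * X 1 + X 2 : MvPolynomial (Fin 3) k) = 0 := by
    rw [coeff_add, coeff_mul_X', coeff_X']
    simp [Finsupp.support_single_ne_zero, Finsupp.single_eq_single_iff, tsub_self]
  have hT2 : coeff (Finsupp.single (2:Fin 3) 1) (X 0 * X 1 + X 2 : MvPolynomial (Fin 3) k) = 1 := by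
    rw [coeff_add, coeff_mul_X', coeff_X']
    simp [Finsupp.support_single_ne_zero, Finsupp.single_eq_single_iff]
  have hT01 : coeff (Finsupp.single (0:Fin 3) 1 + Finsupp.single (1:Fin 3) 1)
      (X 0 * X 1 + X 2 : MvPolynomial (Fin 3) k) = 1 := by
    rw [coeff_add, coeff_mul_X', coeff_X']
    have h1 : (1:Fin 3) ∈ (Finsupp.single (0:Fin 3) 1 + Finsupp.single (1:Fin 3) 1).support := by
      simp [Finsupp.mem_support_iff, Finsupp.single_apply]
    rw [if_pos h1, add_tsub_cancel_right, if_pos rfl, coeff_X']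
    rw [if_neg (by
      intro hh
      have := congrArg (fun v : Fin 3 →₀ ℕ => v 2) hh
      simp [Finsupp.single_apply] at this)]
    ring
  -- the four coefficient equations
  have heqx : a * g0 = 0 := by
    have h := hDcoeff (Finsupp.single 0 1) (by simp [Finsupp.single_apply])
      (by simp [Finsupp.single_apply]) (by simp [Finsupp.single_apply])
    rw [hdetM', hdetN, coeff_C_mul, hT0, hlK] at h
    simp only [hmemiff] at h
    simp [tsub_self, hcoeff0K] at h
    simpa using h
  have heqy : b * g0 = 0 := by
    have h := hDcoeff (Finsupp.single 1 1) (by simp [Finsupp.single_apply])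
      (by simp [Finsupp.single_apply]) (by simp [Finsupp.single_apply])
    rw [hdetM', hdetN, coeff_C_mul, hT1, hlK] at h
    simp only [hmemiff] at h
    simp [tsub_self, hcoeff0K] at h
    simpa using h
  have heqz : (u p) ^ 2 + c * g0 = 0 := by
    have h := hDcoeff (Finsupp.single 2 1) (by simp [Finsupp.single_apply])
      (by simp [Finsupp.single_apply]) (by simp [Finsupp.single_apply])
    rw [hdetM', hdetN, coeff_C_mul, hT2, hlK] at h
    simp only [hmemiff] at h
    simp [tsub_self, hcoeff0K] at h
    simpa using h
  have hg0ne : g0 ≠ 0 := by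
    intro h0
    rw [h0, mul_zero, add_zero] at heqz
    exact pow_ne_zero 2 hup heqz
  have ha0 : a = 0 := (mul_eq_zero.mp heqx).resolve_right hg0ne
  have hb0 : b = 0 := (mul_eq_zero.mp heqy).resolve_right hg0ne
  have hm01 : ∀ i : Fin 3,
      i ∈ (Finsupp.single (0:Fin 3) (1:ℕ) + Finsupp.single 1 1).support ↔ (i = 0 ∨ i = 1) := by
    intro i
    fin_cases i <;> simp [Finsupp.mem_support_iff, Finsupp.single_apply]
  have h := hDcoeff (Finsupp.single 0 1 + Finsupp.single 1 1)
    (by simp [Finsupp.add_apply, Finsupp.single_apply])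
    (by simp [Finsupp.add_apply, Finsupp.single_apply])
    (by simp [Finsupp.add_apply, Finsupp.single_apply])
  rw [hdetM', hdetN, coeff_C_mul, hT01, hlK] at h
  simp only [hm01] at h
  rw [if_neg (by decide : ¬ ((2:Fin 3) = 0 ∨ (2:Fin 3) = 1)), ha0, hb0] at h
  simp only [zero_mul, mul_zero, mul_one, add_zero, zero_add] at h
  exact pow_ne_zero 2 hup h
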